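/- Let μ and ν be probability measures on a finite set X with probability distributions p and q, let c: X × X → ℝ≥0 with κ > max c(x,y), and define c_a on 2^X × 2^X by: c_a({x},{y}) = c(x,y); c_a({x},B) = c_a(A,{y}) = κ when the other argument is a non-singleton (including ∅); c_a(A,B) = 0 when both A and B are non-singletons. Consider the (max,+)-transform transport problem: minimize ∑ c_a(A,B)·assg(A,B) over nonnegative assg with assg(∅,∅) = 0, ∑_{B ⊆ X} assg(A,B) = τ_μ(A) for nonempty A, ∑_{A ⊆ X} assg(A,B) = τ_ν(B) for nonempty B, where τ_μ, τ_ν are (max,+)-transforms. Then the optimal value equals the optimal value of the classical transport problem between p and q with cost c, and an optimal assg restricted to singleton pairs is an optimal classical transport plan. -/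

import Mathlib

open Finset

/-- The (max,+)-transform of a set function `μ`:
`τ_μ(B) = μ(B) − max_{A ⊊ B} μ(A)` for nonempty `B`, and `0` on `∅`. -/
noncomputable def tauMax {X : Type*} [DecidableEq X] (μ : Finset X → ℝ) (B : Finset X) : ℝ :=
  if h : B.Nonempty then
    μ B - (B.powerset.erase B).sup'
      ⟨∅, Finset.mem_erase.mpr ⟨Ne.symm h.ne_empty, Finset.empty_mem_powerset B⟩⟩ μ
  else 0

/-- Feasibility for the classical optimal transport problem between the
distributions `x ↦ μ {x}` and `y ↦ ν {y}` on the same reference set. -/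
def ClassFeas {X : Type*} [Fintype X] [DecidableEq X]
    (μ ν : Finset X → ℝ) (γ : X → X → ℝ) : Prop :=
  (∀ x y, 0 ≤ γ x y) ∧ (∀ x, ∑ y, γ x y = μ {x}) ∧ (∀ y, ∑ x, γ x y = ν {y})

/-- Feasibility for the (max,+)-transform transport problem. -/
noncomputable def MaxPlusFeas {X : Type*} [Fintype X] [DecidableEq X]
    (μ ν : Finset X → ℝ) (assg : Finset X → Finset X → ℝ) : Prop :=
  (∀ A B : Finset X, 0 ≤ assg A B ∧ assg A B ≤ 1) ∧
  assg ∅ ∅ = 0 ∧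
  (∀ A : Finset X, A.Nonempty → ∑ B : Finset X, assg A B = tauMax μ A) ∧
  (∀ B : Finset X, B.Nonempty → ∑ A : Finset X, assg A B = tauMax ν B)

set_option linter.unusedSectionVars false

section Helpers
variable {X : Type*} [Fintype X] [DecidableEq X]

lemma mu_mono (μ : Finset X → ℝ) (hr : ∀ A : Finset X, 0 ≤ μ A)
    (hadd : ∀ A B : Finset X, Disjoint A B → μ (A ∪ B) = μ A + μ B)
    {A B : Finset X} (h : A ⊆ B) : μ A ≤ μ B := by
  have h1 : μ (A ∪ B \ A) = μ A + μ (B \ A) := hadd _ _ Finset.disjoint_sdiff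
  rw [Finset.union_sdiff_of_subset h] at h1
  have := hr (B \ A)
  linarith

lemma tau_singleton (μ : Finset X → ℝ) (h0 : μ ∅ = 0) (x : X) :
    tauMax μ {x} = μ {x} := by
  have hsup : ∀ (h : (({x} : Finset X).powerset.erase {x}).Nonempty),
      (({x} : Finset X).powerset.erase {x}).sup' h μ = 0 := by
    intro h
    apply le_antisymm
    · apply Finset.sup'_le
      intro B hB
      rw [Finset.mem_erase, Finset.mem_powerset] at hB
      rcases Finset.subset_singleton_iff.mp hB.2 with rfl | rfl
      · rw [h0]
      · exact absurd rfl hB.1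
    · calc (0:ℝ) = μ ∅ := h0.symm
        _ ≤ _ := Finset.le_sup' μ (Finset.mem_erase.mpr
            ⟨(Finset.singleton_ne_empty x).symm, Finset.empty_mem_powerset _⟩)
  simp only [tauMax, dif_pos (Finset.singleton_nonempty x), hsup]
  exact sub_eq_self.mpr (hsup _)

lemma tau_nonneg (μ : Finset X → ℝ) (hr : ∀ A : Finset X, 0 ≤ μ A)
    (hadd : ∀ A B : Finset X, Disjoint A B → μ (A ∪ B) = μ A + μ B)
    (A : Finset X) : 0 ≤ tauMax μ A := by
  rw [tauMax]
  split
  · rw [sub_nonneg]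
    apply Finset.sup'_le
    intro B hB
    exact mu_mono μ hr hadd (Finset.mem_powerset.mp (Finset.mem_of_mem_erase hB))
  · exact le_refl 0

lemma tau_le_one (μ : Finset X → ℝ) (h0 : μ ∅ = 0) (h1 : ∀ A : Finset X, μ A ≤ 1)
    (A : Finset X) : tauMax μ A ≤ 1 := by
  rw [tauMax]
  split
  case isTrue h =>
    have h2 : (0:ℝ) ≤ (A.powerset.erase A).sup'
        ⟨∅, Finset.mem_erase.mpr ⟨Ne.symm h.ne_empty, Finset.empty_mem_powerset A⟩⟩ μ := by
      calc (0:ℝ) = μ ∅ := h0.symm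
        _ ≤ _ := Finset.le_sup' μ (Finset.mem_erase.mpr
            ⟨Ne.symm h.ne_empty, Finset.empty_mem_powerset A⟩)
    have := h1 A
    linarith
  case isFalse => exact zero_le_one

lemma sum_mu_singletons (μ : Finset X → ℝ) (h0 : μ ∅ = 0)
    (hadd : ∀ A B : Finset X, Disjoint A B → μ (A ∪ B) = μ A + μ B)
    (S : Finset X) : ∑ x ∈ S, μ {x} = μ S := by
  induction S using Finset.induction with
  | empty => simpa using h0.symm
  | insert a S ha ih =>
    rw [Finset.sum_insert ha, ih, Finset.insert_eq,
      hadd _ _ (Finset.disjoint_singleton_left.mpr ha)]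

lemma sum_singleton_sets (g : Finset X → ℝ) :
    ∑ B ∈ univ.filter (fun B : Finset X => B.card = 1), g B = ∑ y, g {y} := by
  have himg : univ.filter (fun B : Finset X => B.card = 1)
      = univ.image (fun y : X => ({y} : Finset X)) := by
    ext B
    simp [Finset.card_eq_one, eq_comm]
  rw [himg, Finset.sum_image (fun x _ y _ h => Finset.singleton_injective h)]

lemma split_sum (g : Finset X → ℝ) :
    ∑ B : Finset X, g B = (∑ y, g {y})
      + ∑ B ∈ univ.filter (fun B : Finset X => ¬ B.card = 1), g B := by
  rw [← sum_singleton_sets g, Finset.sum_filter_add_sum_filter_not]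

end Helpers

theorem stmt11 {X : Type*} [Fintype X] [DecidableEq X]
    (μ ν : Finset X → ℝ)
    (hμrange : ∀ A : Finset X, 0 ≤ μ A ∧ μ A ≤ 1)
    (hμ0 : μ (∅ : Finset X) = 0) (hμ1 : μ (Finset.univ : Finset X) = 1)
    (hμadd : ∀ A B : Finset X, Disjoint A B → μ (A ∪ B) = μ A + μ B)
    (hνrange : ∀ B : Finset X, 0 ≤ ν B ∧ ν B ≤ 1)
    (hν0 : ν (∅ : Finset X) = 0) (hν1 : ν (Finset.univ : Finset X) = 1)
    (hνadd : ∀ A B : Finset X, Disjoint A B → ν (A ∪ B) = ν A + ν B)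
    (c : X → X → ℝ) (hc : ∀ x y, 0 ≤ c x y)
    (κ : ℝ) (hκ : ∀ x y, c x y < κ)
    (ca : Finset X → Finset X → ℝ)
    (hca1 : ∀ x y : X, ca {x} {y} = c x y)
    (hca2 : ∀ A B : Finset X, A.card = 1 → B.card ≠ 1 → ca A B = κ)
    (hca3 : ∀ A B : Finset X, A.card ≠ 1 → B.card = 1 → ca A B = κ)
    (hca4 : ∀ A B : Finset X, A.card ≠ 1 → B.card ≠ 1 → ca A B = 0) :
    sInf {t : ℝ | ∃ γ : X → X → ℝ, ClassFeas μ ν γ ∧ t = ∑ x, ∑ y, c x y * γ x y} =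
      sInf {t : ℝ | ∃ assg : Finset X → Finset X → ℝ, MaxPlusFeas μ ν assg ∧
        t = ∑ A : Finset X, ∑ B : Finset X, ca A B * assg A B} ∧
    ∀ assg : Finset X → Finset X → ℝ, MaxPlusFeas μ ν assg →
      (∑ A : Finset X, ∑ B : Finset X, ca A B * assg A B) =
        sInf {t : ℝ | ∃ assg' : Finset X → Finset X → ℝ, MaxPlusFeas μ ν assg' ∧
          t = ∑ A : Finset X, ∑ B : Finset X, ca A B * assg' A B} →
      ClassFeas μ ν (fun x y => assg {x} {y}) ∧
      (∑ x, ∑ y, c x y * assg {x} {y}) =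
        sInf {t : ℝ | ∃ γ : X → X → ℝ, ClassFeas μ ν γ ∧ t = ∑ x, ∑ y, c x y * γ x y} := by
  classical
  rcases isEmpty_or_nonempty X with hX | hX
  · exfalso
    rw [Finset.univ_eq_empty, hμ0] at hμ1
    norm_num at hμ1
  obtain ⟨x₀⟩ := hX
  have hκpos : 0 < κ := lt_of_le_of_lt (hc x₀ x₀) (hκ x₀ x₀)
  set S0 : Finset (Finset X) := univ.filter (fun B : Finset X => ¬ B.card = 1) with hS0def
  set Sc : Set ℝ :=
    {t : ℝ | ∃ γ : X → X → ℝ, ClassFeas μ ν γ ∧ t = ∑ x, ∑ y, c x y * γ x y} with hScdef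
  set Sm : Set ℝ :=
    {t : ℝ | ∃ assg : Finset X → Finset X → ℝ, MaxPlusFeas μ ν assg ∧
      t = ∑ A : Finset X, ∑ B : Finset X, ca A B * assg A B} with hSmdef
  have hμR : ∀ A : Finset X, 0 ≤ μ A := fun A => (hμrange A).1
  have hνR : ∀ A : Finset X, 0 ≤ ν A := fun A => (hνrange A).1
  have hτμs : ∀ x : X, tauMax μ {x} = μ {x} := tau_singleton μ hμ0
  have hτνs : ∀ y : X, tauMax ν {y} = ν {y} := tau_singleton ν hν0
  have hτμ0 : ∀ A : Finset X, 0 ≤ tauMax μ A := tau_nonneg μ hμR hμadd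
  have hτν0 : ∀ A : Finset X, 0 ≤ tauMax ν A := tau_nonneg ν hνR hνadd
  have hτμ1 : ∀ A : Finset X, tauMax μ A ≤ 1 := tau_le_one μ hμ0 (fun A => (hμrange A).2)
  have hτν1 : ∀ A : Finset X, tauMax ν A ≤ 1 := tau_le_one ν hν0 (fun A => (hνrange A).2)
  have hp1 : ∑ x : X, μ {x} = 1 := by rw [sum_mu_singletons μ hμ0 hμadd, hμ1]
  have hq1 : ∑ y : X, ν {y} = 1 := by rw [sum_mu_singletons ν hν0 hνadd, hν1]
  -- cost identity
  have cost_id : ∀ assg : Finset X → Finset X → ℝ,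
      ∑ A : Finset X, ∑ B : Finset X, ca A B * assg A B
        = (∑ x, ∑ y, c x y * assg {x} {y})
          + κ * ((∑ x, ∑ B ∈ S0, assg {x} B) + (∑ y, ∑ A ∈ S0, assg A {y})) := by
    intro assg
    rw [split_sum (fun A => ∑ B : Finset X, ca A B * assg A B)]
    have hrow1 : ∀ x : X, ∑ B : Finset X, ca {x} B * assg {x} B
        = (∑ y, c x y * assg {x} {y}) + κ * ∑ B ∈ S0, assg {x} B := by
      intro x
      rw [split_sum (fun B => ca {x} B * assg {x} B), Finset.mul_sum]
      congr 1
      · exact Finset.sum_congr rfl fun y _ => by rw [hca1]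
      · refine Finset.sum_congr rfl fun B hB => ?_
        rw [hca2 _ _ (Finset.card_singleton x) (Finset.mem_filter.mp hB).2]
    have hrow2 : ∀ A ∈ S0, ∑ B : Finset X, ca A B * assg A B = κ * ∑ y, assg A {y} := by
      intro A hA
      have hA1 : ¬ A.card = 1 := (Finset.mem_filter.mp hA).2
      rw [split_sum (fun B => ca A B * assg A B), Finset.mul_sum]
      have h2 : ∑ B ∈ S0, ca A B * assg A B = 0 :=
        Finset.sum_eq_zero fun B hB => by
          rw [hca4 _ _ hA1 (Finset.mem_filter.mp hB).2, zero_mul]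
      rw [h2, add_zero]
      exact Finset.sum_congr rfl fun y _ => by rw [hca3 _ _ hA1 (Finset.card_singleton y)]
    rw [Finset.sum_congr rfl (fun x _ => hrow1 x), Finset.sum_congr rfl hrow2]
    have e1 : ∑ x, ((∑ y, c x y * assg {x} {y}) + κ * ∑ B ∈ S0, assg {x} B)
        = (∑ x, ∑ y, c x y * assg {x} {y}) + κ * (∑ x, ∑ B ∈ S0, assg {x} B) := by
      rw [Finset.sum_add_distrib, Finset.mul_sum]
    have e2 : ∑ A ∈ S0, κ * ∑ y, assg A {y} = κ * (∑ y, ∑ A ∈ S0, assg A {y}) := by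
      rw [← Finset.mul_sum, Finset.sum_comm]
    rw [e1, e2]
    ring
  -- marginal identities
  have hrow' : ∀ assg : Finset X → Finset X → ℝ, MaxPlusFeas μ ν assg → ∀ x : X,
      (∑ y, assg {x} {y}) + (∑ B ∈ S0, assg {x} B) = μ {x} := by
    intro assg hfe x
    have h := hfe.2.2.1 {x} (Finset.singleton_nonempty x)
    rw [split_sum (fun B => assg {x} B), hτμs] at h
    exact h
  have hcol' : ∀ assg : Finset X → Finset X → ℝ, MaxPlusFeas μ ν assg → ∀ y : X,
      (∑ x, assg {x} {y}) + (∑ A ∈ S0, assg A {y}) = ν {y} := by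
    intro assg hfe y
    have h := hfe.2.2.2 {y} (Finset.singleton_nonempty y)
    rw [split_sum (fun A => assg A {y}), hτνs] at h
    exact h
  have hMN : ∀ assg : Finset X → Finset X → ℝ, MaxPlusFeas μ ν assg →
      (∑ x, ∑ B ∈ S0, assg {x} B) = (∑ y, ∑ A ∈ S0, assg A {y}) := by
    intro assg hfe
    have h1 : ∑ x, ((∑ y, assg {x} {y}) + (∑ B ∈ S0, assg {x} B)) = 1 := by
      rw [Finset.sum_congr rfl (fun x _ => hrow' assg hfe x), hp1]
    have h2 : ∑ y, ((∑ x, assg {x} {y}) + (∑ A ∈ S0, assg A {y})) = 1 := by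
      rw [Finset.sum_congr rfl (fun y _ => hcol' assg hfe y), hq1]
    rw [Finset.sum_add_distrib] at h1 h2
    rw [Finset.sum_comm (f := fun x y => assg {x} {y})] at h1
    linarith
  -- bounds
  have hSc_bdd : BddBelow Sc := by
    refine ⟨0, fun t ht => ?_⟩
    obtain ⟨γ, hγ, rfl⟩ := ht
    exact Finset.sum_nonneg fun x _ => Finset.sum_nonneg fun y _ =>
      mul_nonneg (hc x y) (hγ.1 x y)
  have hSm_bdd : BddBelow Sm := by
    refine ⟨0, fun t ht => ?_⟩
    obtain ⟨assg, hfe, rfl⟩ := ht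
    rw [cost_id assg]
    have h1 : (0:ℝ) ≤ ∑ x, ∑ y, c x y * assg {x} {y} :=
      Finset.sum_nonneg fun x _ => Finset.sum_nonneg fun y _ =>
        mul_nonneg (hc x y) (hfe.1 _ _).1
    have h2 : (0:ℝ) ≤ ∑ x, ∑ B ∈ S0, assg {x} B :=
      Finset.sum_nonneg fun x _ => Finset.sum_nonneg fun B _ => (hfe.1 _ _).1
    have h3 : (0:ℝ) ≤ ∑ y, ∑ A ∈ S0, assg A {y} :=
      Finset.sum_nonneg fun y _ => Finset.sum_nonneg fun A _ => (hfe.1 _ _).1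
    have := mul_nonneg hκpos.le (add_nonneg h2 h3)
    linarith
  -- key lower bound via completion
  have key_lb : ∀ assg : Finset X → Finset X → ℝ, MaxPlusFeas μ ν assg →
      sInf Sc ≤ (∑ x, ∑ y, c x y * assg {x} {y})
        + κ * (∑ x, ∑ B ∈ S0, assg {x} B) := by
    intro assg hfe
    set m : X → ℝ := fun x => ∑ B ∈ S0, assg {x} B with hmdef
    set n : X → ℝ := fun y => ∑ A ∈ S0, assg A {y} with hndef
    have hm0 : ∀ x, 0 ≤ m x := fun x => Finset.sum_nonneg fun B _ => (hfe.1 _ _).1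
    have hn0 : ∀ y, 0 ≤ n y := fun y => Finset.sum_nonneg fun A _ => (hfe.1 _ _).1
    have hM0 : 0 ≤ ∑ x, m x := Finset.sum_nonneg fun x _ => hm0 x
    have hNM : ∑ y, n y = ∑ x, m x := (hMN assg hfe).symm
    by_cases hM : ∑ x, m x = 0
    · have hmx : ∀ x, m x = 0 := by
        intro x
        exact (Finset.sum_eq_zero_iff_of_nonneg (fun x _ => hm0 x)).1 hM x (Finset.mem_univ x)
      have hfeas : ClassFeas μ ν (fun x y => assg {x} {y}) := by
        refine ⟨fun x y => (hfe.1 _ _).1, fun x => ?_, fun y => ?_⟩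
        · have := hrow' assg hfe x
          rw [show (∑ B ∈ S0, assg {x} B) = m x from rfl, hmx x] at this
          linarith
        · have := hcol' assg hfe y
          have hny : n y = 0 := by
            have : ∀ y, n y = 0 := by
              intro y
              refine (Finset.sum_eq_zero_iff_of_nonneg (fun y _ => hn0 y)).1 ?_ y
                (Finset.mem_univ y)
              rw [hNM, hM]
            exact this y
          rw [show (∑ A ∈ S0, assg A {y}) = n y from rfl, hny] at this
          linarith
      have hmem : (∑ x, ∑ y, c x y * assg {x} {y}) ∈ Sc := ⟨_, hfeas, rfl⟩
      have := csInf_le hSc_bdd hmem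
      rw [hM]
      linarith
    · have hMpos : 0 < ∑ x, m x := lt_of_le_of_ne hM0 (Ne.symm hM)
      have haux : ∀ x, ∑ y, m x * n y / (∑ x, m x) = m x := by
        intro x
        rw [← Finset.sum_div, ← Finset.mul_sum, hNM, mul_div_assoc,
          div_self hM, mul_one]
      have hauxc : ∀ y, ∑ x, m x * n y / (∑ x, m x) = n y := by
        intro y
        rw [← Finset.sum_div, ← Finset.sum_mul, mul_comm, mul_div_assoc, div_self hM, mul_one]
      have hfeas : ClassFeas μ ν (fun x y => assg {x} {y} + m x * n y / (∑ x, m x)) := by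
        refine ⟨fun x y => add_nonneg (hfe.1 _ _).1
          (div_nonneg (mul_nonneg (hm0 x) (hn0 y)) hM0), fun x => ?_, fun y => ?_⟩
        · rw [Finset.sum_add_distrib, haux x]
          have := hrow' assg hfe x
          linarith
        · rw [Finset.sum_add_distrib, hauxc y]
          have := hcol' assg hfe y
          linarith
      have hmem : (∑ x, ∑ y, c x y * (assg {x} {y} + m x * n y / (∑ x, m x))) ∈ Sc :=
        ⟨_, hfeas, rfl⟩
      have hle := csInf_le hSc_bdd hmem
      have hcost : ∑ x, ∑ y, c x y * (assg {x} {y} + m x * n y / (∑ x, m x))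
          ≤ (∑ x, ∑ y, c x y * assg {x} {y}) + κ * (∑ x, m x) := by
        have hsum : ∑ x, ∑ y, c x y * (assg {x} {y} + m x * n y / (∑ x, m x))
            = (∑ x, ∑ y, c x y * assg {x} {y})
              + ∑ x, ∑ y, c x y * (m x * n y / (∑ x, m x)) := by
          rw [← Finset.sum_add_distrib]
          refine Finset.sum_congr rfl fun x _ => ?_
          rw [← Finset.sum_add_distrib]
          exact Finset.sum_congr rfl fun y _ => by ring
        rw [hsum]
        have hb : ∑ x, ∑ y, c x y * (m x * n y / (∑ x, m x))
            ≤ ∑ x, ∑ y, κ * (m x * n y / (∑ x, m x)) := by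
          refine Finset.sum_le_sum fun x _ => Finset.sum_le_sum fun y _ => ?_
          exact mul_le_mul_of_nonneg_right (hκ x y).le
            (div_nonneg (mul_nonneg (hm0 x) (hn0 y)) hM0)
        have heq : ∑ x, ∑ y, κ * (m x * n y / (∑ x, m x)) = κ * (∑ x, m x) := by
          rw [show (∑ x, ∑ y, κ * (m x * n y / (∑ x, m x)))
              = κ * ∑ x, ∑ y, m x * n y / (∑ x, m x) by
            rw [Finset.mul_sum]
            exact Finset.sum_congr rfl fun x _ => by rw [Finset.mul_sum]]
          rw [Finset.sum_congr rfl fun x _ => haux x]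
        linarith
      linarith
  -- nonemptiness
  have hprod : ClassFeas μ ν (fun x y => μ {x} * ν {y}) := by
    refine ⟨fun x y => mul_nonneg (hμR _) (hνR _), fun x => ?_, fun y => ?_⟩
    · rw [← Finset.mul_sum, hq1, mul_one]
    · rw [← Finset.sum_mul, hp1, one_mul]
  have hSc_ne : Sc.Nonempty := ⟨_, ⟨_, hprod, rfl⟩⟩
  -- embedding: classical plan → maxplus plan of equal cost
  have embed : ∀ γ : X → X → ℝ, ClassFeas μ ν γ →
      ∃ assg : Finset X → Finset X → ℝ, MaxPlusFeas μ ν assg ∧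
        (∑ A : Finset X, ∑ B : Finset X, ca A B * assg A B) = ∑ x, ∑ y, c x y * γ x y := by
    intro γ hγ
    obtain ⟨hγ0, hγr, hγc⟩ := hγ
    have hγ1 : ∀ x y, γ x y ≤ 1 := by
      intro x y
      have h1 : γ x y ≤ ∑ y', γ x y' :=
        Finset.single_le_sum (fun y' _ => hγ0 x y') (Finset.mem_univ y)
      rw [hγr x] at h1
      exact h1.trans (hμrange {x}).2
    set assg : Finset X → Finset X → ℝ := fun A B =>
      (∑ x, if A = {x} then (∑ y, if B = {y} then γ x y else 0) else 0)
      + (if ¬ A.card = 1 ∧ A ≠ ∅ ∧ B = ∅ then tauMax μ A else 0)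
      + (if ¬ B.card = 1 ∧ B ≠ ∅ ∧ A = ∅ then tauMax ν B else 0) with hassg
    have hsing : ∀ (x : X) (B : Finset X),
        assg {x} B = ∑ y, if B = {y} then γ x y else 0 := by
      intro x B
      rw [hassg]
      simp [Finset.singleton_ne_empty, Finset.singleton_inj]
    have hsingv : ∀ x y : X, assg {x} {y} = γ x y := by
      intro x y
      rw [hsing]
      simp [Finset.singleton_inj]
    have hns : ∀ A B : Finset X, ¬ A.card = 1 → A.Nonempty →
        assg A B = if B = ∅ then tauMax μ A else 0 := by
      intro A B hA1 hAne
      have hAx : ∀ x : X, A ≠ {x} := fun x h => hA1 (by rw [h]; exact Finset.card_singleton x)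
      rw [hassg]
      simp [hAx, hA1, hAne.ne_empty]
    have hnsc : ∀ A B : Finset X, ¬ B.card = 1 → B.Nonempty → ¬ A.card = 1 → A ≠ ∅ →
        assg A B = if B = ∅ then tauMax μ A else 0 := fun A B _ _ h1 h2 =>
      hns A B h1 (Finset.nonempty_iff_ne_empty.2 h2)
    have hfeas : MaxPlusFeas μ ν assg := by
      refine ⟨?_, ?_, ?_, ?_⟩
      · intro A B
        constructor
        · rw [hassg]
          refine add_nonneg (add_nonneg (Finset.sum_nonneg fun x _ => ?_) ?_) ?_
          · split
            · exact Finset.sum_nonneg fun y _ => by split <;> simp [hγ0]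
            · exact le_refl 0
          · split
            · exact hτμ0 A
            · exact le_refl 0
          · split
            · exact hτν0 B
            · exact le_refl 0
        · by_cases hA1 : A.card = 1
          · obtain ⟨x, rfl⟩ := Finset.card_eq_one.mp hA1
            rw [hsing]
            by_cases hB1 : B.card = 1
            · obtain ⟨y, rfl⟩ := Finset.card_eq_one.mp hB1
              calc (∑ y', if ({y} : Finset X) = {y'} then γ x y' else 0) = γ x y := by
                    simp [Finset.singleton_inj]
                _ ≤ 1 := hγ1 x y
            · have : ∀ y : X, B ≠ {y} := fun y h =>
                hB1 (by rw [h]; exact Finset.card_singleton y)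
              simp [this]
          · by_cases hAne : A = ∅
            · subst hAne
              rw [hassg]
              have : ∀ x : X, (∅ : Finset X) ≠ {x} :=
                fun x => (Finset.singleton_ne_empty x).symm
              simp only [this, if_false, Finset.sum_const_zero, zero_add]
              simp only [show ¬((¬(∅:Finset X).card = 1) ∧ (∅:Finset X) ≠ ∅ ∧ B = ∅) by
                simp, if_false, zero_add]
              split
              · exact hτν1 B
              · exact zero_le_one
            · rw [hns A B hA1 (Finset.nonempty_iff_ne_empty.2 hAne)]
              split
              · exact hτμ1 A
              · exact zero_le_one
      · rw [hassg]
        have h : ∀ x : X, (∅ : Finset X) ≠ {x} := fun x => (Finset.singleton_ne_empty x).symm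
        simp [h]
      · intro A hA
        by_cases hA1 : A.card = 1
        · obtain ⟨x, rfl⟩ := Finset.card_eq_one.mp hA1
          rw [Finset.sum_congr rfl (fun B _ => hsing x B), Finset.sum_comm]
          rw [hτμs x, ← hγr x]
          refine Finset.sum_congr rfl fun y _ => ?_
          simp
        · rw [Finset.sum_congr rfl (fun B _ => hns A B hA1 hA)]
          simp
      · intro B hB
        by_cases hB1 : B.card = 1
        · obtain ⟨y, rfl⟩ := Finset.card_eq_one.mp hB1
          have hA : ∀ A : Finset X, assg A {y}
              = ∑ x, if A = {x} then γ x y else 0 := by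
            intro A
            rw [hassg]
            simp [Finset.singleton_ne_empty, Finset.singleton_inj]
          rw [Finset.sum_congr rfl (fun A _ => hA A), Finset.sum_comm]
          rw [hτνs y, ← hγc y]
          refine Finset.sum_congr rfl fun x _ => ?_
          simp
        · have hA : ∀ A : Finset X, assg A B = if A = ∅ then tauMax ν B else 0 := by
            intro A
            have hBx : ∀ y : X, B ≠ {y} := fun y h =>
              hB1 (by rw [h]; exact Finset.card_singleton y)
            rw [hassg]
            simp [hBx, hB1, hB.ne_empty]
          rw [Finset.sum_congr rfl (fun A _ => hA A)]
          simp
    refine ⟨assg, hfeas, ?_⟩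
    rw [cost_id assg]
    have hm : ∀ x, ∑ B ∈ S0, assg {x} B = 0 := by
      intro x
      refine Finset.sum_eq_zero fun B hB => ?_
      have hB1 : ¬ B.card = 1 := (Finset.mem_filter.mp hB).2
      have hBx : ∀ y : X, B ≠ {y} := fun y h =>
        hB1 (by rw [h]; exact Finset.card_singleton y)
      rw [hsing]
      simp [hBx]
    have hn : ∀ y, ∑ A ∈ S0, assg A {y} = 0 := by
      intro y
      refine Finset.sum_eq_zero fun A hA => ?_
      have hA1 : ¬ A.card = 1 := (Finset.mem_filter.mp hA).2
      have hAx : ∀ x : X, A ≠ {x} := fun x h =>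
        hA1 (by rw [h]; exact Finset.card_singleton x)
      rw [hassg]
      simp [hAx, Finset.singleton_ne_empty]
    rw [Finset.sum_congr rfl (fun x _ => hm x), Finset.sum_congr rfl (fun y _ => hn y)]
    simp only [Finset.sum_const_zero, add_zero, mul_zero]
    exact Finset.sum_congr rfl fun x _ => Finset.sum_congr rfl fun y _ => by rw [hsingv]
  have hSm_ne : Sm.Nonempty := by
    obtain ⟨assg, hfe, hco⟩ := embed _ hprod
    exact ⟨_, assg, hfe, rfl⟩
  have le1 : sInf Sc ≤ sInf Sm := by
    refine le_csInf hSm_ne fun t ht => ?_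
    obtain ⟨assg, hfe, rfl⟩ := ht
    rw [cost_id assg]
    have h3 : (0:ℝ) ≤ ∑ y, ∑ A ∈ S0, assg A {y} :=
      Finset.sum_nonneg fun y _ => Finset.sum_nonneg fun A _ => (hfe.1 _ _).1
    have := key_lb assg hfe
    have := mul_nonneg hκpos.le h3
    nlinarith [key_lb assg hfe]
  have le2 : sInf Sm ≤ sInf Sc := by
    refine le_csInf hSc_ne fun t ht => ?_
    obtain ⟨γ, hγ, rfl⟩ := ht
    obtain ⟨assg, hfe, hco⟩ := embed γ hγ
    exact csInf_le hSm_bdd ⟨assg, hfe, hco.symm⟩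
  have heq : sInf Sc = sInf Sm := le_antisymm le1 le2
  refine ⟨heq, ?_⟩
  intro assg hfe hopt
  have hcost := cost_id assg
  have hNMe := hMN assg hfe
  have hkl := key_lb assg hfe
  have hM0 : 0 ≤ ∑ x, ∑ B ∈ S0, assg {x} B :=
    Finset.sum_nonneg fun x _ => Finset.sum_nonneg fun B _ => (hfe.1 _ _).1
  have hInf : (∑ A : Finset X, ∑ B : Finset X, ca A B * assg A B) = sInf Sc := by
    rw [hopt, heq]
  have hMzero : (∑ x, ∑ B ∈ S0, assg {x} B) = 0 := by
    rw [hcost, ← hNMe] at hInf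
    nlinarith
  have hmx : ∀ x, ∑ B ∈ S0, assg {x} B = 0 := fun x =>
    (Finset.sum_eq_zero_iff_of_nonneg
      (fun x _ => Finset.sum_nonneg fun B _ => (hfe.1 _ _).1)).1 hMzero x (Finset.mem_univ x)
  have hny : ∀ y, ∑ A ∈ S0, assg A {y} = 0 := fun y =>
    (Finset.sum_eq_zero_iff_of_nonneg
      (fun y _ => Finset.sum_nonneg fun A _ => (hfe.1 _ _).1)).1
      (by rw [← hNMe, hMzero]) y (Finset.mem_univ y)
  have hfeas : ClassFeas μ ν (fun x y => assg {x} {y}) := by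
    refine ⟨fun x y => (hfe.1 _ _).1, fun x => ?_, fun y => ?_⟩
    · have := hrow' assg hfe x
      rw [hmx x] at this
      linarith
    · have := hcol' assg hfe y
      rw [hny y] at this
      linarith
  refine ⟨hfeas, ?_⟩
  rw [hcost, hMzero, ← hNMe, hMzero] at hInf
  simpa using hInf
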